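/- Let c ∈ ℝ and define p : ℝ → ℝ by p(z) = (z/2)·(c²z² − 1)/(c²z² + 1). Then for every z ∈ ℝ, the first-order ODE 4·p(z)·p'(z) − z + c²·(z − 2·p(z))³ = 0 holds. (Note the denominator c²z² + 1 is always positive, so p is defined and differentiable on all of ℝ.) -/

import Mathlib

/-- `p(z) = (z/2)·(c²z² − 1)/(c²z² + 1)` solves the reduced
first-order ODE `4pp' − z + c²(z − 2p)³ = 0` on all of `ℝ`. -/
theorem stmt_16 (c : ℝ) (p : ℝ → ℝ)
    (hp : p = fun z => z / 2 * ((c ^ 2 * z ^ 2 - 1) / (c ^ 2 * z ^ 2 + 1))) :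
    ∀ z : ℝ,
      4 * p z * deriv p z - z + c ^ 2 * (z - 2 * p z) ^ 3 = 0 := by
  subst hp
  intro z
  have hden : c ^ 2 * z ^ 2 + 1 ≠ 0 := by positivity
  have h1 : HasDerivAt (fun z : ℝ => c ^ 2 * z ^ 2 - 1) (c ^ 2 * (2 * z)) z := by
    simpa using (((hasDerivAt_pow 2 z).const_mul (c ^ 2)).sub_const 1)
  have h2 : HasDerivAt (fun z : ℝ => c ^ 2 * z ^ 2 + 1) (c ^ 2 * (2 * z)) z := by
    simpa using (((hasDerivAt_pow 2 z).const_mul (c ^ 2)).add_const 1)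
  have h3 : HasDerivAt (fun z : ℝ => z / 2) (1 / 2) z := by
    simpa using (hasDerivAt_id z).div_const 2
  have hd : HasDerivAt (fun z => z / 2 * ((c ^ 2 * z ^ 2 - 1) / (c ^ 2 * z ^ 2 + 1))) _ z :=
    h3.mul (h1.div h2 hden)
  rw [hd.deriv]
  field_simp
  ring
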